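/- Let μ, ν, ρ be finite nonempty sets and consider the triangle structure observation map T(m, n, r) = (f_a(n, r), f_b(r, m), f_c(m, n)) with values in (Fin 2)³. If the image of T contains (1,0,0), (0,1,0), and (0,0,1), then the image of T also contains at least one triple in which two or more coordinates equal 1, or the triple (0,0,0). -/
import Mathlib


/-- if the image of the triangle observation map contains all
three one-hot triples, it also contains a triple with at least two `1`s or
the triple `(0,0,0)`. -/
theorem triangle_image_extra
    {μ ν ρ : Type*} [Fintype μ] [Fintype ν] [Fintype ρ]
    [Nonempty μ] [Nonempty ν] [Nonempty ρ]
    (f_a : ν × ρ → Fin 2) (f_b : ρ × μ → Fin 2) (f_c : μ × ν → Fin 2)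
    (h100 : ((1 : Fin 2), (0 : Fin 2), (0 : Fin 2)) ∈ Set.range (fun t : μ × ν × ρ =>
        (f_a (t.2.1, t.2.2), f_b (t.2.2, t.1), f_c (t.1, t.2.1))))
    (h010 : ((0 : Fin 2), (1 : Fin 2), (0 : Fin 2)) ∈ Set.range (fun t : μ × ν × ρ =>
        (f_a (t.2.1, t.2.2), f_b (t.2.2, t.1), f_c (t.1, t.2.1))))
    (h001 : ((0 : Fin 2), (0 : Fin 2), (1 : Fin 2)) ∈ Set.range (fun t : μ × ν × ρ =>
        (f_a (t.2.1, t.2.2), f_b (t.2.2, t.1), f_c (t.1, t.2.1)))) :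
    ∃ s ∈ Set.range (fun t : μ × ν × ρ =>
        (f_a (t.2.1, t.2.2), f_b (t.2.2, t.1), f_c (t.1, t.2.1))),
      ((s.1 = 1 ∧ s.2.1 = 1) ∨ (s.1 = 1 ∧ s.2.2 = 1) ∨ (s.2.1 = 1 ∧ s.2.2 = 1))
        ∨ s = (0, 0, 0) := by

  obtain ⟨⟨m1, n1, r1⟩, h1⟩ := h100
  obtain ⟨⟨m2, n2, r2⟩, h2⟩ := h010
  obtain ⟨⟨m3, n3, r3⟩, h3⟩ := h001
  simp only [Prod.mk.injEq] at h1 h2 h3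
  obtain ⟨ha1, hb1, hc1⟩ := h1
  obtain ⟨ha2, hb2, hc2⟩ := h2
  obtain ⟨ha3, hb3, hc3⟩ := h3
  -- consider the mixed point (m2, n3, r1)
  set A := f_a (n3, r1) with hA
  set B := f_b (r1, m2) with hB
  set C := f_c (m2, n3) with hC
  by_cases hA1 : A = 1
  · -- point (m3, n3, r1): a = 1, c = f_c(m3,n3) = 1
    exact ⟨_, ⟨(m3, n3, r1), rfl⟩, Or.inl (Or.inr (Or.inl ⟨hA1, hc3⟩))⟩
  · by_cases hB1 : B = 1
    · -- point (m2, n1, r1): a = 1, b = 1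
      exact ⟨_, ⟨(m2, n1, r1), rfl⟩, Or.inl (Or.inl ⟨ha1, hB1⟩)⟩
    · by_cases hC1 : C = 1
      · -- point (m2, n3, r2): b = 1, c = 1
        exact ⟨_, ⟨(m2, n3, r2), rfl⟩, Or.inl (Or.inr (Or.inr ⟨hb2, hC1⟩))⟩
      · -- all zero at (m2, n3, r1)
        refine ⟨_, ⟨(m2, n3, r1), rfl⟩, Or.inr ?_⟩
        have h0 : ∀ x : Fin 2, x ≠ 1 → x = 0 := by decide
        simp only [Prod.mk.injEq]
        exact ⟨h0 A hA1, h0 B hB1, h0 C hC1⟩
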